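/- Let C = {[x_0:x_1:x_2] ∈ ℂP² : x_0² + x_1² + x_2² = 0} be the standard smooth conic and let ω_FS denote the Fubini–Study Kähler form on ℂP². Then for all indices 0 ≤ λ, μ ≤ 2 one has ∫_C (x_λ x̄_μ / |x|²) ω_FS = (2/3) δ_{λμ}, where |x|² = |x_0|² + |x_1|² + |x_2|² and δ_{λμ} is the Kronecker delta (the integrand is well defined since it is invariant under scaling of homogeneous coordinates). -/

import Mathlib

open MeasureTheory

/-- Parametrization of the smooth conic `C = {x₀² + x₁² + x₂² = 0} ⊂ ℂP²` by the affine
chart `z ↦ [z : 1]` of `ℂP¹`: indeed `(z²-1)² + (i(z²+1))² + (-2z)² = 0`.  Under this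
parametrization the Fubini–Study form of `ℂP²` (normalized so lines have area `1`)
pulls back to the density `(2/π)(1+|z|²)^{-2}` with respect to Lebesgue measure on `ℂ`,
since `|x(z)|² = 2(1+|z|²)²`. -/
noncomputable def conicParam (z : ℂ) : Fin 3 → ℂ :=
  ![z ^ 2 - 1, Complex.I * (z ^ 2 + 1), -2 * z]

namespace ConicAux

open Set Filter

noncomputable def K (z : ℂ) : ℝ := (Real.pi * (1 + ‖z‖ ^ 2) ^ 4)⁻¹

lemma sum_normsq (z : ℂ) : (∑ k, (‖conicParam z k‖ : ℝ) ^ 2) = 2 * (1 + ‖z‖ ^ 2) ^ 2 := by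
  simp only [Fin.sum_univ_three, conicParam, Matrix.cons_val_zero, Matrix.cons_val_one,
    Matrix.head_cons, Matrix.cons_val_two, Matrix.tail_cons]
  simp only [Complex.sq_norm]
  simp only [Complex.normSq_apply, Complex.sub_re, Complex.sub_im, Complex.add_re,
    Complex.add_im, Complex.mul_re, Complex.mul_im, Complex.I_re, Complex.I_im,
    Complex.one_re, Complex.one_im, Complex.neg_re, Complex.neg_im, pow_two]
  norm_num
  ring

/-! ### symmetry tools -/

lemma mp_rot : MeasurePreserving (fun z : ℂ => Complex.I * z) := by
  set c : Circle := ⟨Complex.I, mem_sphere_zero_iff_norm.mpr Complex.norm_I⟩ with hc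
  have h : (fun z : ℂ => Complex.I * z) = ⇑(rotation c) := by
    funext z; rw [rotation_apply]
  rw [h]; exact (rotation _).measurePreserving

lemma emb_rot : MeasurableEmbedding (fun z : ℂ => Complex.I * z) := by
  set c : Circle := ⟨Complex.I, mem_sphere_zero_iff_norm.mpr Complex.norm_I⟩ with hc
  have h : (fun z : ℂ => Complex.I * z) = ⇑(rotation c) := by
    funext z; rw [rotation_apply]
  rw [h]; exact (rotation c).toHomeomorph.measurableEmbedding

lemma mp_conj : MeasurePreserving (fun z : ℂ => (starRingEnd ℂ) z) :=
  Complex.conjLIE.measurePreserving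

lemma emb_conj : MeasurableEmbedding (fun z : ℂ => (starRingEnd ℂ) z) :=
  Complex.conjLIE.toHomeomorph.measurableEmbedding

lemma mp_neg : MeasurePreserving (fun z : ℂ => -z) := Measure.measurePreserving_neg _

lemma emb_neg : MeasurableEmbedding (fun z : ℂ => -z) :=
  (Homeomorph.neg ℂ).measurableEmbedding

lemma vanishC {f : ℂ → ℂ} {e : ℂ → ℂ} (he : MeasurePreserving e volume volume)
    (hme : MeasurableEmbedding e) (h : ∀ z, f (e z) = -f z) : ∫ z, f z = 0 := by
  have h1 : ∫ z, f z = ∫ z, f (e z) := (he.integral_comp hme f).symm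
  have h2 : ∫ z, f (e z) = -∫ z, f z := by simp [h, integral_neg]
  have h3 := h1.trans h2
  have : (2 : ℂ) * ∫ z, f z = 0 := by linear_combination h3
  simpa using this

lemma vanishR {f : ℂ → ℝ} {e : ℂ → ℂ} (he : MeasurePreserving e volume volume)
    (hme : MeasurableEmbedding e) (h : ∀ z, f (e z) = -f z) : ∫ z, f z = 0 := by
  have h1 : ∫ z, f z = ∫ z, f (e z) := (he.integral_comp hme f).symm
  have h2 : ∫ z, f (e z) = -∫ z, f z := by simp [h, integral_neg]
  linarith [h1.trans h2]

/-! ### radial integrals -/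

lemma radial (f : ℝ → ℝ) :
    ∫ z : ℂ, f ‖z‖ = 2 * Real.pi * ∫ r in Ioi (0:ℝ), r * f r := by
  rw [MeasureTheory.integral_fun_norm_addHaar (volume : Measure ℂ) f]
  simp only [Complex.finrank_real_complex, Complex.volume_ball, smul_eq_mul, nsmul_eq_mul]
  norm_num
  simp only [Measure.real, Complex.volume_ball, ENNReal.ofReal_one, one_pow, one_mul, ENNReal.coe_toReal, NNReal.coe_real_pi]
  ring

lemma h_u (r : ℝ) : HasDerivAt (fun r : ℝ => 1 + r ^ 2) (2 * r) r := by
  simpa using ((hasDerivAt_pow 2 r).const_add 1)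

lemma h_un (n : ℕ) (r : ℝ) :
    HasDerivAt (fun r : ℝ => ((1 + r ^ 2) ^ n)⁻¹)
      (-((n : ℝ) * (1 + r ^ 2) ^ (n - 1) * (2 * r)) / ((1 + r ^ 2) ^ n) ^ 2) r :=
  (((h_u r).pow n)).inv (by simp only [Pi.pow_apply]; positivity)

lemma tend_un (n : ℕ) (hn : n ≠ 0) :
    Tendsto (fun r : ℝ => ((1 + r ^ 2) ^ n)⁻¹) atTop (nhds 0) := by
  apply Filter.Tendsto.comp tendsto_inv_atTop_zero
  exact (tendsto_pow_atTop hn).comp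
    (tendsto_atTop_add_const_left _ 1 (tendsto_pow_atTop two_ne_zero))

lemma I0 : ∫ r in Ioi (0:ℝ), r / (1 + r ^ 2) ^ 4 = 1 / 6 := by
  have key := integral_Ioi_of_hasDerivAt_of_nonneg' (a := 0) (l := 0)
    (g := fun r => -(1/6) * ((1 + r ^ 2) ^ 3)⁻¹)
    (g' := fun r => r / (1 + r ^ 2) ^ 4)
    (fun x _ => by
      have := (h_un 3 x).const_mul (-(1/6) : ℝ)
      refine this.congr_deriv ?_
      have h1 : (0:ℝ) < 1 + x ^ 2 := by positivity
      field_simp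
      ring)
    (fun x hx => by have hx0 : (0:ℝ) < x := hx; positivity)
    (by simpa using (tend_un 3 (by norm_num)).const_mul (-(1/6) : ℝ))
  norm_num at key
  linarith

lemma I1 : ∫ r in Ioi (0:ℝ), r ^ 3 / (1 + r ^ 2) ^ 4 = 1 / 12 := by
  have key := integral_Ioi_of_hasDerivAt_of_nonneg' (a := 0) (l := 0)
    (g := fun r => -(1/4) * ((1 + r ^ 2) ^ 2)⁻¹ + (1/6) * ((1 + r ^ 2) ^ 3)⁻¹)
    (g' := fun r => r ^ 3 / (1 + r ^ 2) ^ 4)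
    (fun x _ => by
      have := ((h_un 2 x).const_mul (-(1/4) : ℝ)).add ((h_un 3 x).const_mul ((1/6) : ℝ))
      refine this.congr_deriv ?_
      have h1 : (0:ℝ) < 1 + x ^ 2 := by positivity
      field_simp
      ring)
    (fun x hx => by have hx0 : (0:ℝ) < x := hx; positivity)
    (by
      have := ((tend_un 2 (by norm_num)).const_mul (-(1/4) : ℝ)).add
        ((tend_un 3 (by norm_num)).const_mul ((1/6) : ℝ))
      simpa using this)
  norm_num at key
  linarith

lemma I2 : ∫ r in Ioi (0:ℝ), r ^ 5 / (1 + r ^ 2) ^ 4 = 1 / 6 := by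
  have key := integral_Ioi_of_hasDerivAt_of_nonneg' (a := 0) (l := 0)
    (g := fun r => -(1/2) * ((1 + r ^ 2) ^ 1)⁻¹ + (1/2) * ((1 + r ^ 2) ^ 2)⁻¹
      + -(1/6) * ((1 + r ^ 2) ^ 3)⁻¹)
    (g' := fun r => r ^ 5 / (1 + r ^ 2) ^ 4)
    (fun x _ => by
      have := (((h_un 1 x).const_mul (-(1/2) : ℝ)).add
        ((h_un 2 x).const_mul ((1/2) : ℝ))).add ((h_un 3 x).const_mul (-(1/6) : ℝ))
      refine this.congr_deriv ?_
      have h1 : (0:ℝ) < 1 + x ^ 2 := by positivity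
      field_simp
      ring)
    (fun x hx => by have hx0 : (0:ℝ) < x := hx; positivity)
    (by
      have := (((tend_un 1 (by norm_num)).const_mul (-(1/2) : ℝ)).add
        ((tend_un 2 (by norm_num)).const_mul ((1/2) : ℝ))).add
        ((tend_un 3 (by norm_num)).const_mul (-(1/6) : ℝ))
      simpa using this)
  norm_num at key
  linarith

lemma RK0 : ∫ z : ℂ, K z = 1 / 3 := by
  have h := radial (fun r => (Real.pi * (1 + r ^ 2) ^ 4)⁻¹)
  rw [show (fun z : ℂ => K z) = fun z : ℂ => (Real.pi * (1 + ‖z‖ ^ 2) ^ 4)⁻¹ from rfl]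
  rw [h]
  have : ∀ r ∈ Ioi (0:ℝ), r * (Real.pi * (1 + r ^ 2) ^ 4)⁻¹
      = Real.pi⁻¹ * (r / (1 + r ^ 2) ^ 4) := by
    intro r _
    have : (0:ℝ) < 1 + r ^ 2 := by positivity
    field_simp
  rw [setIntegral_congr_fun measurableSet_Ioi this, integral_const_mul, I0]
  field_simp
  ring

lemma RK1 : ∫ z : ℂ, ‖z‖ ^ 2 * K z = 1 / 6 := by
  have h := radial (fun r => r ^ 2 * (Real.pi * (1 + r ^ 2) ^ 4)⁻¹)
  rw [show (fun z : ℂ => ‖z‖ ^ 2 * K z)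
      = fun z : ℂ => ‖z‖ ^ 2 * (Real.pi * (1 + ‖z‖ ^ 2) ^ 4)⁻¹ from rfl]
  rw [h]
  have : ∀ r ∈ Ioi (0:ℝ), r * (r ^ 2 * (Real.pi * (1 + r ^ 2) ^ 4)⁻¹)
      = Real.pi⁻¹ * (r ^ 3 / (1 + r ^ 2) ^ 4) := by
    intro r _
    have : (0:ℝ) < 1 + r ^ 2 := by positivity
    field_simp
  rw [setIntegral_congr_fun measurableSet_Ioi this, integral_const_mul, I1]
  field_simp
  ring

lemma RK2 : ∫ z : ℂ, (‖z‖ ^ 2) ^ 2 * K z = 1 / 3 := by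
  have h := radial (fun r => (r ^ 2) ^ 2 * (Real.pi * (1 + r ^ 2) ^ 4)⁻¹)
  rw [show (fun z : ℂ => (‖z‖ ^ 2) ^ 2 * K z)
      = fun z : ℂ => (‖z‖ ^ 2) ^ 2 * (Real.pi * (1 + ‖z‖ ^ 2) ^ 4)⁻¹ from rfl]
  rw [h]
  have : ∀ r ∈ Ioi (0:ℝ), r * ((r ^ 2) ^ 2 * (Real.pi * (1 + r ^ 2) ^ 4)⁻¹)
      = Real.pi⁻¹ * (r ^ 5 / (1 + r ^ 2) ^ 4) := by
    intro r _
    have : (0:ℝ) < 1 + r ^ 2 := by positivity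
    field_simp
  rw [setIntegral_congr_fun measurableSet_Ioi this, integral_const_mul, I2]
  field_simp
  ring

/-! ### integrability -/

lemma integrable_base : Integrable (fun z : ℂ => ((1 + ‖z‖ ^ 2) ^ 2)⁻¹) := by
  have h4 : ((Module.finrank ℝ ℂ : ℝ)) < 4 := by
    rw [Complex.finrank_real_complex]; norm_num
  have := integrable_rpow_neg_one_add_norm_sq (E := ℂ) (μ := volume) h4
  refine this.congr (Eventually.of_forall fun z => ?_)
  have h1 : (0:ℝ) < 1 + ‖z‖ ^ 2 := by positivity
  show (1 + ‖z‖ ^ 2) ^ (-(4:ℝ) / 2) = ((1 + ‖z‖ ^ 2) ^ 2)⁻¹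
  rw [show (-(4:ℝ) / 2) = -(2:ℝ) by norm_num, Real.rpow_neg h1.le,
    show ((2:ℝ)) = ((2:ℕ):ℝ) by norm_num, Real.rpow_natCast]

lemma contK : Continuous K := by
  apply Continuous.inv₀
  · fun_prop
  · intro z; positivity

lemma integrable_domR {f : ℂ → ℝ} (hc : Continuous f)
    (h : ∀ z, |f z| ≤ (2 / Real.pi) * ((1 + ‖z‖ ^ 2) ^ 2)⁻¹) : Integrable f := by
  refine (integrable_base.const_mul (2 / Real.pi)).mono' hc.aestronglyMeasurable ?_
  exact Eventually.of_forall fun z => by simpa using h z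

lemma integrable_domC {f : ℂ → ℂ} (hc : Continuous f)
    (h : ∀ z, ‖f z‖ ≤ (2 / Real.pi) * ((1 + ‖z‖ ^ 2) ^ 2)⁻¹) : Integrable f := by
  refine (integrable_base.const_mul (2 / Real.pi)).mono' hc.aestronglyMeasurable ?_
  exact Eventually.of_forall fun z => by simpa using h z

lemma bnd {z : ℂ} {a : ℝ} (ha0 : 0 ≤ a) (ha : a ≤ 2 * (1 + ‖z‖ ^ 2) ^ 2) :
    a * K z ≤ (2 / Real.pi) * ((1 + ‖z‖ ^ 2) ^ 2)⁻¹ := by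
  have h1 : (0:ℝ) < 1 + ‖z‖ ^ 2 := by positivity
  have hb : (0:ℝ) < (1 + ‖z‖ ^ 2) ^ 2 := by positivity
  have hπ : (0:ℝ) < Real.pi := Real.pi_pos
  have e : (Real.pi * (1 + ‖z‖ ^ 2) ^ 4)⁻¹
      = ((1 + ‖z‖ ^ 2) ^ 2)⁻¹ * (Real.pi * (1 + ‖z‖ ^ 2) ^ 2)⁻¹ := by
    rw [← mul_inv]; congr 1; ring
  rw [K, e, ← mul_assoc]
  have h2 : a * ((1 + ‖z‖ ^ 2) ^ 2)⁻¹ ≤ 2 := by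
    rw [← div_eq_mul_inv, div_le_iff₀ hb]; linarith
  calc (a * ((1 + ‖z‖ ^ 2) ^ 2)⁻¹) * (Real.pi * (1 + ‖z‖ ^ 2) ^ 2)⁻¹
      ≤ 2 * (Real.pi * (1 + ‖z‖ ^ 2) ^ 2)⁻¹ :=
        mul_le_mul_of_nonneg_right h2 (by positivity)
    _ = (2 / Real.pi) * ((1 + ‖z‖ ^ 2) ^ 2)⁻¹ := by rw [mul_inv]; ring

lemma K_nonneg (z : ℂ) : 0 ≤ K z := by rw [K]; positivity

lemma integrable_K : Integrable K :=
  integrable_domR contK fun z => by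
    have h1 : (0:ℝ) ≤ ‖z‖ ^ 2 := by positivity
    rw [abs_of_nonneg (K_nonneg z), ← one_mul (K z)]
    exact bnd one_pos.le (by nlinarith)

lemma integrable_wK : Integrable (fun z : ℂ => ‖z‖ ^ 2 * K z) :=
  integrable_domR ((continuous_norm.pow 2).mul contK) fun z => by
    have h1 : (0:ℝ) ≤ ‖z‖ ^ 2 := by positivity
    rw [abs_of_nonneg (mul_nonneg (by positivity) (K_nonneg z))]
    exact bnd h1 (by nlinarith)

lemma integrable_w2K : Integrable (fun z : ℂ => (‖z‖ ^ 2) ^ 2 * K z) :=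
  integrable_domR (((continuous_norm.pow 2).pow 2).mul contK) fun z => by
    have h1 : (0:ℝ) ≤ ‖z‖ ^ 2 := by positivity
    rw [abs_of_nonneg (mul_nonneg (by positivity) (K_nonneg z))]
    exact bnd (by positivity) (by nlinarith)

lemma integrable_reK : Integrable (fun z : ℂ => (z ^ 2).re * K z) :=
  integrable_domR ((Complex.continuous_re.comp (continuous_pow 2)).mul contK) fun z => by
    have h1 : (0:ℝ) ≤ ‖z‖ ^ 2 := by positivity
    have h2 : |(z ^ 2).re| ≤ ‖z‖ ^ 2 := by
      calc |(z ^ 2).re| ≤ ‖z ^ 2‖ := Complex.abs_re_le_norm _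
        _ = ‖z‖ ^ 2 := by rw [norm_pow]
    rw [abs_mul, abs_of_nonneg (K_nonneg z)]
    calc |(z ^ 2).re| * K z ≤ ‖z‖ ^ 2 * K z :=
          mul_le_mul_of_nonneg_right h2 (K_nonneg z)
      _ ≤ _ := bnd h1 (by nlinarith)

/-! ### pointwise identities -/

lemma hz_re_im (z : ℂ) : ‖z‖ ^ 2 = z.re * z.re + z.im * z.im := by
  rw [Complex.sq_norm, Complex.normSq_apply]

lemma nsq0 (z : ℂ) : Complex.normSq (z ^ 2 - 1) = (‖z‖ ^ 2) ^ 2 + 1 - 2 * (z ^ 2).re := by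
  rw [hz_re_im]
  simp only [Complex.normSq_apply, Complex.sub_re, Complex.sub_im, Complex.one_re,
    Complex.one_im, pow_two, Complex.mul_re, Complex.mul_im]
  ring

lemma nsq1 (z : ℂ) : Complex.normSq (z ^ 2 + 1) = (‖z‖ ^ 2) ^ 2 + 1 + 2 * (z ^ 2).re := by
  rw [hz_re_im]
  simp only [Complex.normSq_apply, Complex.add_re, Complex.add_im, Complex.one_re,
    Complex.one_im, pow_two, Complex.mul_re, Complex.mul_im]
  ring

lemma mul_conj' (z : ℂ) : z * (starRingEnd ℂ) z = ((‖z‖ ^ 2 : ℝ) : ℂ) := by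
  rw [Complex.mul_conj]
  norm_cast
  rw [Complex.sq_norm]

lemma K_neg (z : ℂ) : K (-z) = K z := by rw [K, K, norm_neg]

lemma K_rot (z : ℂ) : K (Complex.I * z) = K z := by
  rw [K, K, norm_mul, Complex.norm_I, one_mul]

lemma K_conj (z : ℂ) : K ((starRingEnd ℂ) z) = K z := by
  rw [K, K, RCLike.norm_conj]

lemma integrand_eq (lam mu : Fin 3) (z : ℂ) :
    (conicParam z lam * (starRingEnd ℂ) (conicParam z mu)
        / (∑ k, ((‖conicParam z k‖ : ℝ) : ℂ) ^ 2))
      * (((2 / (Real.pi * (1 + ‖z‖ ^ 2) ^ 2)) : ℝ) : ℂ)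
    = conicParam z lam * (starRingEnd ℂ) (conicParam z mu) * ((K z : ℝ) : ℂ) := by
  have hs : (∑ k, ((‖conicParam z k‖ : ℝ) : ℂ) ^ 2) = ((2 * (1 + ‖z‖ ^ 2) ^ 2 : ℝ) : ℂ) := by
    rw [← sum_normsq z]
    push_cast
    rfl
  rw [hs, div_mul_eq_mul_div, mul_div_assoc]
  congr 1
  have hr : (2 / (Real.pi * (1 + ‖z‖ ^ 2) ^ 2)) / (2 * (1 + ‖z‖ ^ 2) ^ 2) = K z := by
    have h1 : (0:ℝ) < 1 + ‖z‖ ^ 2 := by positivity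
    rw [K]
    field_simp
  rw [← hr]
  norm_cast

lemma int_ofReal (g : ℂ → ℝ) :
    ∫ z : ℂ, ((g z : ℝ) : ℂ) = ((∫ z : ℂ, g z : ℝ) : ℂ) := integral_ofReal

/-! ### vanishing angular integrals -/

lemma re_vanish : ∫ z : ℂ, (z ^ 2).re * K z = 0 := by
  refine vanishR mp_rot emb_rot fun z => ?_
  have h2 : (Complex.I * z) ^ 2 = -z ^ 2 := by
    rw [mul_pow, Complex.I_sq]; ring
  rw [h2, K_rot, Complex.neg_re]
  ring

/-! ### the nine cases -/

lemma case00 : ∫ z : ℂ, (z ^ 2 - 1) * (starRingEnd ℂ) (z ^ 2 - 1) * ((K z : ℝ) : ℂ)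
    = (2 / 3 : ℂ) := by
  have hpt : ∀ z : ℂ, (z ^ 2 - 1) * (starRingEnd ℂ) (z ^ 2 - 1) * ((K z : ℝ) : ℂ)
      = (((((‖z‖ ^ 2) ^ 2 * K z + K z) - 2 * ((z ^ 2).re * K z)) : ℝ) : ℂ) := by
    intro z
    rw [Complex.mul_conj, ← Complex.ofReal_mul]
    congr 1
    rw [nsq0]
    ring
  simp only [hpt]
  have hF : Integrable (fun z : ℂ => (‖z‖ ^ 2) ^ 2 * K z + K z) := integrable_w2K.add integrable_K
  have hG : Integrable (fun z : ℂ => 2 * ((z ^ 2).re * K z)) := integrable_reK.const_mul 2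
  have hre : ∫ z : ℂ, (((‖z‖ ^ 2) ^ 2 * K z + K z) - 2 * ((z ^ 2).re * K z)) = (2/3 : ℝ) := by
    rw [integral_sub hF hG, integral_add integrable_w2K integrable_K,
      integral_const_mul, RK2, RK0, re_vanish]
    norm_num
  refine (int_ofReal _).trans ?_
  rw [hre]
  norm_num

lemma case11 : ∫ z : ℂ,
    (Complex.I * (z ^ 2 + 1)) * (starRingEnd ℂ) (Complex.I * (z ^ 2 + 1)) * ((K z : ℝ) : ℂ)
    = (2 / 3 : ℂ) := by
  have hpt : ∀ z : ℂ,
      (Complex.I * (z ^ 2 + 1)) * (starRingEnd ℂ) (Complex.I * (z ^ 2 + 1)) * ((K z : ℝ) : ℂ)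
      = (((((‖z‖ ^ 2) ^ 2 * K z + K z) + 2 * ((z ^ 2).re * K z)) : ℝ) : ℂ) := by
    intro z
    rw [Complex.mul_conj, ← Complex.ofReal_mul]
    congr 1
    rw [Complex.normSq_mul, Complex.normSq_I, one_mul, nsq1]
    ring
  simp only [hpt]
  have hF : Integrable (fun z : ℂ => (‖z‖ ^ 2) ^ 2 * K z + K z) := integrable_w2K.add integrable_K
  have hG : Integrable (fun z : ℂ => 2 * ((z ^ 2).re * K z)) := integrable_reK.const_mul 2
  have hre : ∫ z : ℂ, (((‖z‖ ^ 2) ^ 2 * K z + K z) + 2 * ((z ^ 2).re * K z)) = (2/3 : ℝ) := by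
    rw [integral_add hF hG, integral_add integrable_w2K integrable_K,
      integral_const_mul, RK2, RK0, re_vanish]
    norm_num
  refine (int_ofReal _).trans ?_
  rw [hre]
  norm_num

lemma case22 : ∫ z : ℂ, (-2 * z) * (starRingEnd ℂ) (-2 * z) * ((K z : ℝ) : ℂ)
    = (2 / 3 : ℂ) := by
  have hpt : ∀ z : ℂ, (-2 * z) * (starRingEnd ℂ) (-2 * z) * ((K z : ℝ) : ℂ)
      = (((4 * (‖z‖ ^ 2 * K z)) : ℝ) : ℂ) := by
    intro z
    rw [Complex.mul_conj, ← Complex.ofReal_mul]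
    congr 1
    rw [Complex.normSq_mul]
    have h : Complex.normSq z = ‖z‖ ^ 2 := by
      rw [Complex.sq_norm]
    rw [h]
    have h2 : Complex.normSq (-2) = 4 := by norm_num [Complex.normSq_apply]
    rw [h2]
    ring
  simp only [hpt]
  have hre : ∫ z : ℂ, 4 * (‖z‖ ^ 2 * K z) = (2/3 : ℝ) := by
    rw [integral_const_mul, RK1]
    norm_num
  refine (int_ofReal _).trans ?_
  rw [hre]
  norm_num

lemma case01 : ∫ z : ℂ, (z ^ 2 - 1) * (starRingEnd ℂ) (Complex.I * (z ^ 2 + 1)) * ((K z : ℝ) : ℂ)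
    = 0 := by
  have hpt : ∀ z : ℂ,
      (z ^ 2 - 1) * (starRingEnd ℂ) (Complex.I * (z ^ 2 + 1)) * ((K z : ℝ) : ℂ)
      = (-Complex.I) * (((((‖z‖ ^ 2) ^ 2 - 1) * K z) : ℝ) : ℂ)
        + (-Complex.I) * (z ^ 2 - ((starRingEnd ℂ) z) ^ 2) * ((K z : ℝ) : ℂ) := by
    intro z
    have hzz := mul_conj' z
    simp only [map_mul, map_add, map_pow, map_one, Complex.conj_I]
    push_cast
    push_cast at hzz
    linear_combination (-Complex.I * ((K z : ℝ) : ℂ)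
      * (z * (starRingEnd ℂ) z + (((‖z‖ : ℝ) : ℂ)) ^ 2)) * hzz
  simp only [hpt]
  have int1 : Integrable (fun z : ℂ =>
      (-Complex.I) * (((((‖z‖ ^ 2) ^ 2 - 1) * K z) : ℝ) : ℂ)) := by
    have h0 : Integrable (fun z : ℂ => ((‖z‖ ^ 2) ^ 2 - 1) * K z) := by
      have := integrable_w2K.sub integrable_K
      refine this.congr (Eventually.of_forall fun z => ?_)
      simp only [Pi.sub_apply]
      ring
    exact (h0.ofReal (𝕜 := ℂ)).const_mul _
  have int2 : Integrable (fun z : ℂ =>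
      (-Complex.I) * (z ^ 2 - ((starRingEnd ℂ) z) ^ 2) * ((K z : ℝ) : ℂ)) := by
    refine integrable_domC ?_ fun z => ?_
    · exact (continuous_const.mul ((continuous_pow 2).sub
        (Complex.continuous_conj.pow 2))).mul (Complex.continuous_ofReal.comp contK)
    · have h1 : ‖z ^ 2 - ((starRingEnd ℂ) z) ^ 2‖ ≤ 2 * ‖z‖ ^ 2 := by
        calc ‖z ^ 2 - ((starRingEnd ℂ) z) ^ 2‖ ≤ ‖z ^ 2‖ + ‖((starRingEnd ℂ) z) ^ 2‖ :=
              norm_sub_le _ _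
          _ = 2 * ‖z‖ ^ 2 := by rw [norm_pow, norm_pow, RCLike.norm_conj]; ring
      rw [norm_mul, norm_mul, norm_neg, Complex.norm_I, one_mul, Complex.norm_real,
        Real.norm_eq_abs, abs_of_nonneg (K_nonneg z)]
      calc ‖z ^ 2 - ((starRingEnd ℂ) z) ^ 2‖ * K z ≤ (2 * ‖z‖ ^ 2) * K z :=
            mul_le_mul_of_nonneg_right h1 (K_nonneg z)
        _ ≤ _ := bnd (by positivity) (by nlinarith [sq_nonneg (‖z‖ : ℝ), norm_nonneg z])
  rw [integral_add int1 int2]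
  have e1 : ∫ z : ℂ, (-Complex.I) * (((((‖z‖ ^ 2) ^ 2 - 1) * K z) : ℝ) : ℂ) = 0 := by
    have hre : ∫ z : ℂ, ((‖z‖ ^ 2) ^ 2 - 1) * K z = (0:ℝ) := by
      have hpt2 : ∀ z : ℂ, ((‖z‖ ^ 2) ^ 2 - 1) * K z = (‖z‖ ^ 2) ^ 2 * K z - K z := by
        intro z; ring
      simp only [hpt2]
      rw [integral_sub integrable_w2K integrable_K, RK2, RK0]
      norm_num
    have hc : ∫ z : ℂ, (((((‖z‖ ^ 2) ^ 2 - 1) * K z) : ℝ) : ℂ) = 0 :=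
      (int_ofReal _).trans (by rw [hre]; norm_num)
    rw [integral_const_mul, hc, mul_zero]
  have e2 : ∫ z : ℂ, (-Complex.I) * (z ^ 2 - ((starRingEnd ℂ) z) ^ 2) * ((K z : ℝ) : ℂ) = 0 := by
    refine vanishC mp_conj emb_conj fun z => ?_
    rw [K_conj]
    simp only [Complex.conj_conj]
    ring
  rw [e1, e2]
  norm_num

lemma case10 : ∫ z : ℂ, (Complex.I * (z ^ 2 + 1)) * (starRingEnd ℂ) (z ^ 2 - 1) * ((K z : ℝ) : ℂ)
    = 0 := by
  have hpt : ∀ z : ℂ,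
      (Complex.I * (z ^ 2 + 1)) * (starRingEnd ℂ) (z ^ 2 - 1) * ((K z : ℝ) : ℂ)
      = (starRingEnd ℂ) ((z ^ 2 - 1) * (starRingEnd ℂ) (Complex.I * (z ^ 2 + 1))
          * ((K z : ℝ) : ℂ)) := by
    intro z
    simp only [map_mul, Complex.conj_conj, Complex.conj_ofReal]
    ring
  simp only [hpt]
  rw [integral_conj, case01]
  norm_num

lemma odd02 : ∫ z : ℂ, (z ^ 2 - 1) * (starRingEnd ℂ) (-2 * z) * ((K z : ℝ) : ℂ) = 0 := by
  refine vanishC mp_neg emb_neg fun z => ?_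
  rw [K_neg]
  simp only [neg_sq, map_mul, map_neg, map_sub, map_add, map_pow, map_one, map_ofNat,
    Complex.conj_I]
  ring

lemma odd20 : ∫ z : ℂ, (-2 * z) * (starRingEnd ℂ) (z ^ 2 - 1) * ((K z : ℝ) : ℂ) = 0 := by
  refine vanishC mp_neg emb_neg fun z => ?_
  rw [K_neg]
  simp only [neg_sq, map_mul, map_neg, map_sub, map_add, map_pow, map_one, map_ofNat,
    Complex.conj_I]
  ring

lemma odd12 : ∫ z : ℂ,
    (Complex.I * (z ^ 2 + 1)) * (starRingEnd ℂ) (-2 * z) * ((K z : ℝ) : ℂ) = 0 := by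
  refine vanishC mp_neg emb_neg fun z => ?_
  rw [K_neg]
  simp only [neg_sq, map_mul, map_neg, map_sub, map_add, map_pow, map_one, map_ofNat,
    Complex.conj_I]
  ring

lemma odd21 : ∫ z : ℂ,
    (-2 * z) * (starRingEnd ℂ) (Complex.I * (z ^ 2 + 1)) * ((K z : ℝ) : ℂ) = 0 := by
  refine vanishC mp_neg emb_neg fun z => ?_
  rw [K_neg]
  simp only [neg_sq, map_mul, map_neg, map_sub, map_add, map_pow, map_one, map_ofNat,
    Complex.conj_I]
  ring

end ConicAux

open ConicAux

/-- For the standard smooth conic `C ⊂ ℂP²` and the Fubini–Study form `ω_FS`,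
`∫_C (x_λ x̄_μ / |x|²) ω_FS = (2/3) δ_{λμ}`, expressed via the parametrization
`conicParam` (which covers `C` up to a single point, a set of measure zero). -/
theorem conic_fubiniStudy_integral (lam mu : Fin 3) :
    (∫ z : ℂ,
        (conicParam z lam * (starRingEnd ℂ) (conicParam z mu)
            / (∑ k, ((‖conicParam z k‖ : ℝ) : ℂ) ^ 2))
          * (((2 / (Real.pi * (1 + ‖z‖ ^ 2) ^ 2)) : ℝ) : ℂ))
      = if lam = mu then (2 / 3 : ℂ) else 0 := by
  simp only [integrand_eq]
  fin_cases lam <;> fin_cases mu <;>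
    simp only [conicParam, Matrix.cons_val_zero, Matrix.cons_val_one, Matrix.head_cons,
      Matrix.cons_val_two, Matrix.tail_cons, Fin.isValue] <;>
    first
      | rw [if_pos (by trivial)]
      | rw [if_neg (by decide)]
  · exact case00
  · exact case01
  · exact odd02
  · exact case10
  · exact case11
  · exact odd12
  · exact odd20
  · exact odd21
  · exact case22
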